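/- Let T : X ⇉ X* be a maximal monotone operator. Then D((δ_{D(T)})*) ⊆ 0⁺(cl_{w*} conv R(T)), i.e. every x* ∈ X* at which the support function of D(T) is finite is a recession direction of the weak-* closed convex hull of R(T); and D((δ_{R(T)})*) ∩ X ⊆ 0⁺(cl conv D(T)), i.e. every x ∈ X (viewed in X** via the canonical embedding) at which the support function of R(T) is finite is a recession direction of the norm-closed convex hull of D(T). -/

import Mathlib

open NormedSpace Classical

noncomputable section

/-- effective domain of an extended-real-valued function -/
def edom {E : Type*} (f : E → EReal) : Set E := {x | f x < ⊤}

/-- indicator function (0 on the set, +∞ off it) -/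
def indic {E : Type*} (C : Set E) : E → EReal := fun x => if x ∈ C then 0 else ⊤

/-- convexity for EReal-valued functions -/
def ErConvex {E : Type*} [AddCommGroup E] [Module ℝ E] (f : E → EReal) : Prop :=
  ∀ x y : E, ∀ a b : ℝ, 0 ≤ a → 0 ≤ b → a + b = 1 →
    f (a • x + b • y) ≤ (a : EReal) * f x + (b : EReal) * f y

/-- recession cone of a set -/
def recc {E : Type*} [AddCommGroup E] [Module ℝ E] (C : Set E) : Set E :=
  {u | ∀ z ∈ C, ∀ t : ℝ, 0 ≤ t → z + t • u ∈ C}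

variable (X : Type*) [NormedAddCommGroup X] [NormedSpace ℝ X]

/-- Fenchel conjugate of f : X → EReal, defined on the dual -/
def conj1 (f : X → EReal) : StrongDual ℝ X → EReal :=
  fun p => ⨆ x : X, ((p x : EReal) - f x)

/-- Fenchel conjugate of h : X × X* → EReal, defined on X* × X** via
⟨(x,x*),(y*,y**)⟩ = ⟨x,y*⟩ + ⟨y**,x*⟩ -/
def conj2 (h : X × StrongDual ℝ X → EReal) : StrongDual ℝ X × StrongDual ℝ (StrongDual ℝ X) → EReal :=
  fun p => ⨆ z : X × StrongDual ℝ X, (((p.1 z.1 + p.2 z.2 : ℝ) : EReal) - h z)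

/-- The J operation: (Jh)(x,x*) = h*(x*, x), with X canonically embedded in X** -/
def Jop (h : X × StrongDual ℝ X → EReal) : X × StrongDual ℝ X → EReal :=
  fun z => conj2 X h (z.2, inclusionInDoubleDual ℝ X z.1)

/-- the duality product as an EReal-valued function on X × X* -/
def pairE : X × StrongDual ℝ X → EReal := fun z => ((z.2 z.1 : ℝ) : EReal)

/-- weak-* closure of a subset of the dual -/
def wcl (S : Set (StrongDual ℝ X)) : Set (StrongDual ℝ X) :=
  StrongDual.toWeakDual ⁻¹' closure (StrongDual.toWeakDual '' S)

/-- monotone subset of X × X* -/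
def MonotoneSet (T : Set (X × StrongDual ℝ X)) : Prop :=
  ∀ p ∈ T, ∀ q ∈ T, 0 ≤ (p.2 - q.2) (p.1 - q.1)

/-- maximal monotone subset of X × X* -/
def MaxMonotone (T : Set (X × StrongDual ℝ X)) : Prop :=
  MonotoneSet X T ∧ ∀ S : Set (X × StrongDual ℝ X), MonotoneSet X S → T ⊆ S → S = T

/-- the Fitzpatrick family of a maximal monotone operator: closed convex functions
majorizing the duality product and coinciding with it on T -/
def FitzFamily (T : Set (X × StrongDual ℝ X)) : Set ((X × StrongDual ℝ X) → EReal) :=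
  {h | ErConvex h ∧ LowerSemicontinuous h ∧ (∀ z, pairE X z ≤ h z) ∧
       ∀ z ∈ T, h z = pairE X z}

/-- lower semicontinuity with respect to the strong × weak-* topology on X × X* -/
def lscSW (h : X × StrongDual ℝ X → EReal) : Prop :=
  LowerSemicontinuous (fun p : X × WeakDual ℝ X => h (p.1, StrongDual.toWeakDual.symm p.2))

end



section Aux

open Set

variable {X : Type*} [NormedAddCommGroup X] [NormedSpace ℝ X]

lemma maxMonotone_nonempty {T : Set (X × StrongDual ℝ X)} (hT : MaxMonotone X T) :
    T.Nonempty := by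
  by_contra h
  rw [Set.not_nonempty_iff_eq_empty] at h
  have hm : MonotoneSet X {((0 : X), (0 : StrongDual ℝ X))} := by
    intro p hp q hq
    simp only [Set.mem_singleton_iff] at hp hq
    simp [hp, hq]
  have := hT.2 _ hm (by simp [h])
  rw [h] at this
  exact (Set.singleton_ne_empty _) this

lemma bound_of_conj1_lt_top {E : Type*} [NormedAddCommGroup E] [NormedSpace ℝ E]
    (C : Set E) (hC : C.Nonempty) (p : StrongDual ℝ E)
    (h : conj1 E (indic C) p < ⊤) : ∃ M : ℝ, ∀ y ∈ C, p y ≤ M := by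
  set S := conj1 E (indic C) p with hS
  have hle : ∀ y ∈ C, ((p y : EReal)) ≤ S := by
    intro y hy
    have h1 := le_iSup (fun x : E => ((p x : EReal) - indic C x)) y
    have h2 : indic C y = 0 := by simp [indic, hy]
    rw [h2] at h1
    rw [sub_zero] at h1
    exact h1
  obtain ⟨y₀, hy₀⟩ := hC
  have hbot : S ≠ ⊥ := by
    intro hb
    have := hle y₀ hy₀
    rw [hb] at this
    exact (EReal.coe_ne_bot _) (le_bot_iff.mp this)
  refine ⟨S.toReal, fun y hy => ?_⟩
  have h1 := hle y hy
  rw [← EReal.coe_toReal h.ne hbot] at h1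
  exact_mod_cast h1

lemma key_lemma {T : Set (X × StrongDual ℝ X)} (hT : MaxMonotone X T)
    (x : X) (xs : StrongDual ℝ X) (M₁ M₂ : ℝ)
    (h1 : ∀ p ∈ T, xs p.1 ≤ M₁) (h2 : ∀ p ∈ T, p.2 x ≤ M₂) : xs x ≤ 0 := by
  obtain ⟨p₀, hp₀⟩ := maxMonotone_nonempty hT
  by_contra hc
  push_neg at hc
  set c : ℝ := xs x with hcdef
  set C₀ : ℝ := p₀.2 x - M₂ + xs p₀.1 - M₁ with hC₀
  set l : ℝ := max 0 (max ((-C₀)/c) ((M₁ - xs p₀.1)/c + 1)) with hl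
  have hl0 : (0:ℝ) ≤ l := le_max_left _ _
  have hl1 : 0 ≤ C₀ + l * c := by
    have : (-C₀)/c ≤ l := le_trans (le_max_left _ _) (le_max_right _ _)
    have := (div_le_iff₀ hc).mp this
    linarith
  have hl2 : M₁ < xs p₀.1 + l * c := by
    have h3 : (M₁ - xs p₀.1)/c + 1 ≤ l := le_trans (le_max_right _ _) (le_max_right _ _)
    have h4 : (M₁ - xs p₀.1)/c ≤ l - 1 := by linarith
    have := (div_le_iff₀ hc).mp h4
    nlinarith
  set q : X × StrongDual ℝ X := (p₀.1 + l • x, p₀.2 + l • xs) with hqdef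
  have hq : ∀ p ∈ T, 0 ≤ (q.2 - p.2) (q.1 - p.1) := by
    intro p hp
    have mono := hT.1 p₀ hp₀ p hp
    have e1 := h1 p hp
    have e2 := h2 p hp
    simp only [hqdef, ContinuousLinearMap.sub_apply, ContinuousLinearMap.add_apply,
      ContinuousLinearMap.smul_apply, map_add, map_sub, map_smul, smul_eq_mul] at mono ⊢
    nlinarith [mul_le_mul_of_nonneg_left e1 hl0, mul_le_mul_of_nonneg_left e2 hl0,
      mul_nonneg hl0 hl1]
  have hsymm : ∀ (a b : X) (f g : StrongDual ℝ X), (f - g) (a - b) = (g - f) (b - a) := by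
    intro a b f g
    simp only [ContinuousLinearMap.sub_apply, map_sub]
    ring
  have hS : MonotoneSet X (insert q T) := by
    intro p hp r hr
    rcases hp with rfl | hp <;> rcases hr with rfl | hr
    · simp
    · exact hq r hr
    · rw [hsymm]; exact hq p hp
    · exact hT.1 p hp r hr
  have heq : insert q T = T := hT.2 _ hS (Set.subset_insert _ _)
  have hqT : q ∈ T := heq ▸ Set.mem_insert q T
  have hfin := h1 q hqT
  simp only [hqdef, map_add, map_smul, smul_eq_mul] at hfin
  linarith

instance weakDualLocallyConvex : LocallyConvexSpace ℝ (WeakDual ℝ X) :=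
  WeakBilin.locallyConvexSpace (B := topDualPairing ℝ X)

lemma weakdual_dual_eval (f : WeakDual ℝ X →L[ℝ] ℝ) :
    ∃ x : X, ∀ w : WeakDual ℝ X, f w = w x := by
  have : Nonempty X := ⟨0⟩
  have hq : Continuous ⇑(f.toLinearMap.toSeminorm) := by
    show Continuous fun w => ‖f w‖
    exact f.continuous.norm
  obtain ⟨s, C, hC, hle⟩ := Seminorm.bound_of_continuous
    ((topDualPairing ℝ X).weakBilin_withSeminorms) f.toLinearMap.toSeminorm hq
  set L : ↥s → (WeakDual ℝ X →ₗ[ℝ] ℝ) := fun i => (topDualPairing ℝ X).flip (i : X) with hL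
  have hker : ⨅ i, LinearMap.ker (L i) ≤ LinearMap.ker f.toLinearMap := by
    intro w hw
    simp only [Submodule.mem_iInf, LinearMap.mem_ker] at hw
    have hsup : (s.sup ((topDualPairing ℝ X).toSeminormFamily)) w ≤ 0 := by
      apply Seminorm.finset_sup_apply_le le_rfl
      intro i hi
      have h3 : w i = 0 := hw ⟨i, hi⟩
      have h4 : ((topDualPairing ℝ X).toSeminormFamily i) w = ‖((topDualPairing ℝ X) w) i‖ :=
        LinearMap.toSeminormFamily_apply
      rw [h4]
      show ‖w i‖ ≤ 0
      rw [h3, norm_zero]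
    have h5 := hle w
    simp only [Seminorm.smul_apply, smul_eq_mul] at h5
    have h6 : ‖f w‖ ≤ (C : ℝ) * 0 := by
      calc ‖f w‖ = f.toLinearMap.toSeminorm w := rfl
        _ ≤ (C : ℝ) * (s.sup ((topDualPairing ℝ X).toSeminormFamily)) w := h5
        _ ≤ (C : ℝ) * 0 := by
            apply mul_le_mul_of_nonneg_left hsup (by positivity)
    rw [LinearMap.mem_ker]
    have h7 : ‖f w‖ ≤ 0 := by linarith
    simpa using le_antisymm h7 (norm_nonneg _)
  have hmem := mem_span_of_iInf_ker_le_ker hker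
  rw [Submodule.mem_span_range_iff_exists_fun] at hmem
  obtain ⟨cf, hcf⟩ := hmem
  refine ⟨∑ i : ↥s, cf i • (i : X), fun w => ?_⟩
  have h8 := congrFun (congrArg (fun g : WeakDual ℝ X →ₗ[ℝ] ℝ =>
    (g : WeakDual ℝ X → ℝ)) hcf) w
  simp only [LinearMap.coe_sum, Finset.sum_apply, LinearMap.smul_apply, hL,
    LinearMap.flip_apply, smul_eq_mul, topDualPairing_apply] at h8
  have h9 : f w = f.toLinearMap w := rfl
  rw [h9, ← h8]
  have h10 : w (∑ i : ↥s, cf i • (i : X)) = ∑ i : ↥s, cf i * w (i : X) := by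
    rw [map_sum]
    simp [smul_eq_mul]
  rw [h10]
  exact Finset.sum_congr rfl fun i _ => rfl

end Aux

theorem statement12 (X : Type*) [NormedAddCommGroup X] [NormedSpace ℝ X] [CompleteSpace X]
    (T : Set (X × StrongDual ℝ X)) (hT : MaxMonotone X T) :
    edom (conj1 X (indic (Prod.fst '' T))) ⊆
      recc (wcl X (convexHull ℝ (Prod.snd '' T))) ∧
    {x : X | conj1 (StrongDual ℝ X) (indic (Prod.snd '' T)) (inclusionInDoubleDual ℝ X x) < ⊤} ⊆
      recc (closure (convexHull ℝ (Prod.fst '' T))) := by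
  obtain ⟨p₀, hp₀⟩ := maxMonotone_nonempty hT
  constructor
  · intro xs hxs
    obtain ⟨M₁, hM₁⟩ := bound_of_conj1_lt_top (Prod.fst '' T)
      ⟨p₀.1, Set.mem_image_of_mem _ hp₀⟩ xs hxs
    have h1 : ∀ p ∈ T, xs p.1 ≤ M₁ := fun p hp => hM₁ _ (Set.mem_image_of_mem _ hp)
    intro zs hzs t ht
    by_contra hcon
    set S' := closure (StrongDual.toWeakDual '' (convexHull ℝ (Prod.snd '' T))) with hS'
    have hconv : Convex ℝ S' :=
      ((convex_convexHull ℝ _).linear_image StrongDual.toWeakDual.toLinearMap).closure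
    have hcon' : StrongDual.toWeakDual (zs + t • xs) ∉ S' := hcon
    obtain ⟨f, u, hfu, huf⟩ := geometric_hahn_banach_closed_point hconv isClosed_closure hcon'
    obtain ⟨xx, hxx⟩ := weakdual_dual_eval f
    have h2 : ∀ p ∈ T, p.2 xx ≤ u := by
      intro p hp
      have hmem : StrongDual.toWeakDual p.2 ∈ S' :=
        subset_closure (Set.mem_image_of_mem _
          (subset_convexHull ℝ _ (Set.mem_image_of_mem _ hp)))
      have := hfu _ hmem
      rw [hxx] at this
      exact le_of_lt this
    have hx0 : xs xx ≤ 0 := key_lemma hT xx xs M₁ u h1 h2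
    have hz : f (StrongDual.toWeakDual zs) < u := hfu _ hzs
    rw [hxx] at huf hz
    have hexp : (StrongDual.toWeakDual (zs + t • xs)) xx = zs xx + t * xs xx := by
      show (zs + t • xs) xx = _
      simp
    rw [hexp] at huf
    have hzz : (StrongDual.toWeakDual zs) xx = zs xx := rfl
    rw [hzz] at hz
    nlinarith [mul_nonpos_of_nonneg_of_nonpos ht hx0]
  · intro x hx
    obtain ⟨M₂, hM₂⟩ := bound_of_conj1_lt_top (Prod.snd '' T)
      ⟨p₀.2, Set.mem_image_of_mem _ hp₀⟩ (inclusionInDoubleDual ℝ X x) hx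
    have h2 : ∀ p ∈ T, p.2 x ≤ M₂ := by
      intro p hp
      have := hM₂ _ (Set.mem_image_of_mem _ hp)
      rwa [NormedSpace.dual_def] at this
    intro z hz t ht
    by_contra hcon
    have hconv : Convex ℝ (closure (convexHull ℝ (Prod.fst '' T))) :=
      (convex_convexHull ℝ _).closure
    obtain ⟨f, u, hfu, huf⟩ := geometric_hahn_banach_closed_point hconv isClosed_closure hcon
    have h1 : ∀ p ∈ T, (f : StrongDual ℝ X) p.1 ≤ u := by
      intro p hp
      exact le_of_lt (hfu _ (subset_closure (subset_convexHull ℝ _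
        (Set.mem_image_of_mem _ hp))))
    have hx0 : (f : StrongDual ℝ X) x ≤ 0 := key_lemma hT x f u M₂ h1 h2
    have hzu : f z < u := hfu _ hz
    have hexp : f (z + t • x) = f z + t * f x := by simp
    rw [hexp] at huf
    nlinarith [mul_nonpos_of_nonneg_of_nonpos ht hx0]
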